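/- A necessary and sufficient condition for the projected antisymmetric form to vanish, h_u(k_a)h_u = 0, is that k_a = (1/e)·{u ⊗ (g(u))(k_a) − (g(u))(k_a) ⊗ u}, i.e. in components k_a^{ij} = (1/e)·g_{mn}·u^n·(u^i·k_a^{mj} − u^j·k_a^{mi}); here the key fact is (g(u))(k_a)(g(u)) = g_{im}u^m·k_a^{ij}·g_{jn}u^n = 0 by antisymmetry of k_a. -/

import Mathlib

open Finset

lemma scongr {n : ℕ} {f g : Fin n → ℝ} (h : ∀ x, f x = g x) :
    ∑ x, f x = ∑ x, g x := Finset.sum_congr rfl (fun x _ => h x)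

lemma split2 {n : ℕ} (A B C D : Fin n → ℝ) (c : ℝ) :
    ∑ m : Fin n, ∑ p : Fin n, c * (A m * B p - C m * D p)
      = c * ((∑ m, A m) * (∑ p, B p) - (∑ m, C m) * (∑ p, D p)) := by
  calc ∑ m : Fin n, ∑ p : Fin n, c * (A m * B p - C m * D p)
      = ∑ m : Fin n, c * (A m * (∑ p, B p) - C m * (∑ p, D p)) := by
        apply scongr; intro m
        rw [← Finset.mul_sum, Finset.sum_sub_distrib, ← Finset.mul_sum, ← Finset.mul_sum]
    _ = c * ((∑ m, A m) * (∑ p, B p) - (∑ m, C m) * (∑ p, D p)) := by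
        rw [← Finset.mul_sum, Finset.sum_sub_distrib, ← Finset.sum_mul, ← Finset.sum_mul]

lemma move_right {n : ℕ} (J : Fin n → ℝ) (Y : Fin n → Fin n → Fin n → ℝ) :
    ∑ j : Fin n, (∑ m, ∑ p, Y m p j) * J j
      = ∑ m : Fin n, ∑ p : Fin n, ∑ j, Y m p j * J j := by
  simp only [Finset.sum_mul]
  rw [Finset.sum_comm]
  apply scongr; intro m
  rw [Finset.sum_comm]

lemma move_left {n : ℕ} (F : Fin n → ℝ) (Y : Fin n → Fin n → Fin n → ℝ) :
    ∑ i : Fin n, F i * (∑ m, ∑ p, Y i m p)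
      = ∑ m : Fin n, ∑ p : Fin n, ∑ i, F i * Y i m p := by
  simp only [Finset.mul_sum]
  rw [Finset.sum_comm]
  apply scongr; intro m
  rw [Finset.sum_comm]

lemma regroup {n : ℕ} (F J : Fin n → ℝ) (G K H : Fin n → Fin n → ℝ) :
    ∑ i : Fin n, ∑ j : Fin n, F i * (∑ m, ∑ p, G i m * K m p * H p j) * J j
      = ∑ m : Fin n, ∑ p : Fin n, (∑ i, F i * G i m) * K m p * (∑ j, H p j * J j) := by
  calc ∑ i : Fin n, ∑ j : Fin n, F i * (∑ m, ∑ p, G i m * K m p * H p j) * J j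
      = ∑ i : Fin n, F i * (∑ j, (∑ m, ∑ p, G i m * K m p * H p j) * J j) := by
        apply scongr; intro i
        rw [Finset.mul_sum]
        exact scongr fun j => by ring
    _ = ∑ i : Fin n, F i * (∑ m, ∑ p, ∑ j, (G i m * K m p * H p j) * J j) := by
        apply scongr; intro i
        rw [move_right]
    _ = ∑ i : Fin n, F i * (∑ m, ∑ p, G i m * (K m p * (∑ j, H p j * J j))) := by
        apply scongr; intro i; congr 1
        apply scongr; intro m; apply scongr; intro p
        rw [Finset.mul_sum, Finset.mul_sum]
        exact scongr fun j => by ring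
    _ = ∑ m : Fin n, ∑ p : Fin n, ∑ i, F i * (G i m * (K m p * (∑ j, H p j * J j))) :=
        move_left _ _
    _ = ∑ m : Fin n, ∑ p : Fin n, (∑ i, F i * G i m) * K m p * (∑ j, H p j * J j) := by
        apply scongr; intro m; apply scongr; intro p
        rw [Finset.sum_mul, Finset.sum_mul]
        exact scongr fun i => by ring

/-- Necessary and sufficient condition for vanishing rotation velocity:
h_u(k_a)h_u = 0 iff k_a^{ij} = (1/e)·g_{mn}·u^n·(u^i·k_a^{mj} − u^j·k_a^{mi}). -/
theorem stmt13 (n : ℕ) (glow ginv : Fin n → Fin n → ℝ) (u : Fin n → ℝ)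
    (hsym : ∀ i j, glow i j = glow j i)
    (hinv : ∀ i m, ∑ j, glow i j * ginv j m = if i = m then (1:ℝ) else 0)
    (hinv' : ∀ i m, ∑ j, ginv i j * glow j m = if i = m then (1:ℝ) else 0)
    (e : ℝ) (hedef : e = ∑ i, ∑ j, glow i j * u i * u j) (he : e ≠ 0)
    (ka : Fin n → Fin n → ℝ) (hka : ∀ i j, ka i j = - ka j i)
    (hu : Fin n → Fin n → ℝ)
    (hhu : ∀ i j, hu i j = glow i j -
        (1/e) * (∑ m, glow i m * u m) * (∑ m, glow j m * u m)) :
    (∀ i j, ∑ m, ∑ p, hu i m * ka m p * hu p j = 0) ↔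
    (∀ i j, ka i j =
        (1/e) * ∑ m, (∑ p, glow m p * u p) * (u i * ka m j - u j * ka m i)) := by
  -- abbreviation: W m := ∑ q, glow m q * u q
  have hwu : ∑ m, (∑ q, glow m q * u q) * u m = e := by
    rw [hedef]
    apply scongr; intro m
    rw [Finset.sum_mul]
    exact scongr fun q => by ring
  have hhuu : ∀ i, ∑ m, hu i m * u m = 0 := by
    intro i
    calc ∑ m, hu i m * u m
        = ∑ m, (glow i m * u m -
            (1/e) * (∑ q, glow i q * u q) * ((∑ q, glow m q * u q) * u m)) := by
          apply scongr; intro m; rw [hhu]; ring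
      _ = (∑ m, glow i m * u m) -
            (1/e) * (∑ q, glow i q * u q) * (∑ m, (∑ q, glow m q * u q) * u m) := by
          rw [Finset.sum_sub_distrib, ← Finset.mul_sum]
      _ = 0 := by rw [hwu]; field_simp; simp
  have hhuu2 : ∀ j, ∑ p, u p * hu p j = 0 := by
    intro j
    calc ∑ p, u p * hu p j
        = ∑ p, (glow j p * u p -
            (1/e) * (∑ q, glow j q * u q) * ((∑ q, glow p q * u q) * u p)) := by
          apply scongr; intro p; rw [hhu, hsym p j]; ring
      _ = (∑ p, glow j p * u p) -
            (1/e) * (∑ q, glow j q * u q) * (∑ p, (∑ q, glow p q * u q) * u p) := by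
          rw [Finset.sum_sub_distrib, ← Finset.mul_sum]
      _ = 0 := by rw [hwu]; field_simp; simp
  have hanti : ∑ m, ∑ p, (∑ q, glow m q * u q) * ka m p * (∑ q, glow p q * u q) = 0 := by
    have key : (∑ m, ∑ p, (∑ q, glow m q * u q) * ka m p * (∑ q, glow p q * u q))
        = - ∑ m, ∑ p, (∑ q, glow m q * u q) * ka m p * (∑ q, glow p q * u q) := by
      calc (∑ m, ∑ p, (∑ q, glow m q * u q) * ka m p * (∑ q, glow p q * u q))
          = ∑ m, ∑ p, -((∑ q, glow p q * u q) * ka p m * (∑ q, glow m q * u q)) := by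
            apply scongr; intro m; apply scongr; intro p
            rw [hka]; ring
        _ = - ∑ m, ∑ p, (∑ q, glow p q * u q) * ka p m * (∑ q, glow m q * u q) := by
            simp [Finset.sum_neg_distrib]
        _ = - ∑ p, ∑ m, (∑ q, glow p q * u q) * ka p m * (∑ q, glow m q * u q) := by
            rw [Finset.sum_comm]
    linarith [key]
  constructor
  · -- forward direction
    intro hL a b
    have hua : ∑ i, ginv a i * (∑ q, glow i q * u q) = u a := by
      calc ∑ i, ginv a i * (∑ q, glow i q * u q)
          = ∑ i, ∑ q, (ginv a i * glow i q) * u q := by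
            apply scongr; intro i
            rw [Finset.mul_sum]
            exact scongr fun q => by ring
        _ = ∑ q, (∑ i, ginv a i * glow i q) * u q := by
            rw [Finset.sum_comm]
            exact scongr fun q => (Finset.sum_mul _ _ _).symm
        _ = ∑ q, (if a = q then (1:ℝ) else 0) * u q := scongr fun q => by rw [hinv']
        _ = u a := by simp
    have hub : ∑ j, (∑ q, glow j q * u q) * ginv j b = u b := by
      calc ∑ j, (∑ q, glow j q * u q) * ginv j b
          = ∑ j, ∑ q, (glow q j * ginv j b) * u q := by
            apply scongr; intro j
            rw [Finset.sum_mul]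
            exact scongr fun q => by rw [hsym j q]; ring
        _ = ∑ q, (∑ j, glow q j * ginv j b) * u q := by
            rw [Finset.sum_comm]
            exact scongr fun q => (Finset.sum_mul _ _ _).symm
        _ = ∑ q, (if q = b then (1:ℝ) else 0) * u q := scongr fun q => by rw [hinv]
        _ = u b := by simp
    have hP : ∀ m, ∑ i, ginv a i * hu i m
        = (if a = m then (1:ℝ) else 0) - (1/e) * u a * (∑ q, glow m q * u q) := by
      intro m
      calc ∑ i, ginv a i * hu i m
          = ∑ i, (ginv a i * glow i m -
              (1/e) * (∑ q, glow m q * u q) * (ginv a i * (∑ q, glow i q * u q))) := by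
            apply scongr; intro i; rw [hhu]; ring
        _ = (∑ i, ginv a i * glow i m) -
              (1/e) * (∑ q, glow m q * u q) * (∑ i, ginv a i * (∑ q, glow i q * u q)) := by
            rw [Finset.sum_sub_distrib, ← Finset.mul_sum]
        _ = (if a = m then (1:ℝ) else 0) - (1/e) * u a * (∑ q, glow m q * u q) := by
            rw [hinv', hua]; ring
    have hQ : ∀ p, ∑ j, hu p j * ginv j b
        = (if p = b then (1:ℝ) else 0) - (1/e) * (∑ q, glow p q * u q) * u b := by
      intro p
      calc ∑ j, hu p j * ginv j b
          = ∑ j, (glow p j * ginv j b -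
              (1/e) * (∑ q, glow p q * u q) * ((∑ q, glow j q * u q) * ginv j b)) := by
            apply scongr; intro j; rw [hhu]; ring
        _ = (∑ j, glow p j * ginv j b) -
              (1/e) * (∑ q, glow p q * u q) * (∑ j, (∑ q, glow j q * u q) * ginv j b) := by
            rw [Finset.sum_sub_distrib, ← Finset.mul_sum]
        _ = (if p = b then (1:ℝ) else 0) - (1/e) * (∑ q, glow p q * u q) * u b := by
            rw [hinv, hub]
    have hT : ∑ m, ∑ p, (∑ i, ginv a i * hu i m) * ka m p * (∑ j, hu p j * ginv j b) = 0 := by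
      have h0 : ∑ i, ∑ j, ginv a i * (∑ m, ∑ p, hu i m * ka m p * hu p j) * ginv j b = 0 := by
        apply Finset.sum_eq_zero; intro i _
        apply Finset.sum_eq_zero; intro j _
        rw [hL i j]; ring
      calc ∑ m, ∑ p, (∑ i, ginv a i * hu i m) * ka m p * (∑ j, hu p j * ginv j b)
          = ∑ i, ∑ j, ginv a i * (∑ m, ∑ p, hu i m * ka m p * hu p j) * ginv j b :=
            (regroup _ _ _ _ _).symm
        _ = 0 := h0
    -- substitute hP, hQ into hT
    have hT2 : ∑ m, ∑ p, ((if a = m then (1:ℝ) else 0) - (1/e) * u a * (∑ q, glow m q * u q))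
        * ka m p * ((if p = b then (1:ℝ) else 0) - (1/e) * (∑ q, glow p q * u q) * u b) = 0 := by
      calc ∑ m, ∑ p, ((if a = m then (1:ℝ) else 0) - (1/e) * u a * (∑ q, glow m q * u q))
            * ka m p * ((if p = b then (1:ℝ) else 0) - (1/e) * (∑ q, glow p q * u q) * u b)
          = ∑ m, ∑ p, (∑ i, ginv a i * hu i m) * ka m p * (∑ j, hu p j * ginv j b) := by
            apply scongr; intro m; apply scongr; intro p
            rw [hP m, hQ p]
        _ = 0 := hT
    -- expand the product in hT2
    have hS1 : ∑ m, ∑ p, (if a = m then (1:ℝ) else 0) * ka m p * (if p = b then (1:ℝ) else 0)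
        = ka a b := by simp
    have hS2 : ∑ m, ∑ p, (if a = m then (1:ℝ) else 0) * ka m p
        * ((1/e) * (∑ q, glow p q * u q) * u b)
        = (1/e) * u b * ∑ p, ka a p * (∑ q, glow p q * u q) := by
      calc ∑ m, ∑ p, (if a = m then (1:ℝ) else 0) * ka m p
            * ((1/e) * (∑ q, glow p q * u q) * u b)
          = ∑ p, ka a p * ((1/e) * (∑ q, glow p q * u q) * u b) := by simp
        _ = (1/e) * u b * ∑ p, ka a p * (∑ q, glow p q * u q) := by
            rw [Finset.mul_sum]
            exact scongr fun p => by ring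
    have hS3 : ∑ m, ∑ p, ((1/e) * u a * (∑ q, glow m q * u q)) * ka m p
        * (if p = b then (1:ℝ) else 0)
        = (1/e) * u a * ∑ m, (∑ q, glow m q * u q) * ka m b := by
      calc ∑ m, ∑ p, ((1/e) * u a * (∑ q, glow m q * u q)) * ka m p
            * (if p = b then (1:ℝ) else 0)
          = ∑ m, ((1/e) * u a * (∑ q, glow m q * u q)) * ka m b := by simp
        _ = (1/e) * u a * ∑ m, (∑ q, glow m q * u q) * ka m b := by
            rw [Finset.mul_sum]
            exact scongr fun m => by ring
    have hS4 : ∑ m, ∑ p, ((1/e) * u a * (∑ q, glow m q * u q)) * ka m p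
        * ((1/e) * (∑ q, glow p q * u q) * u b) = 0 := by
      have hfac : ((1/e) * u a * ((1/e) * u b))
            * (∑ m, ∑ p, (∑ q, glow m q * u q) * ka m p * (∑ q, glow p q * u q))
          = ∑ m, ∑ p, ((1/e) * u a * (∑ q, glow m q * u q)) * ka m p
            * ((1/e) * (∑ q, glow p q * u q) * u b) := by
        rw [Finset.mul_sum]
        apply scongr; intro m
        rw [Finset.mul_sum]
        exact scongr fun p => by ring
      rw [← hfac, hanti, mul_zero]
    have hsplit : ∑ m, ∑ p, ((if a = m then (1:ℝ) else 0) - (1/e) * u a * (∑ q, glow m q * u q))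
        * ka m p * ((if p = b then (1:ℝ) else 0) - (1/e) * (∑ q, glow p q * u q) * u b)
        = ka a b - (1/e) * u b * (∑ p, ka a p * (∑ q, glow p q * u q))
          - (1/e) * u a * (∑ m, (∑ q, glow m q * u q) * ka m b) := by
      calc ∑ m, ∑ p, ((if a = m then (1:ℝ) else 0) - (1/e) * u a * (∑ q, glow m q * u q))
            * ka m p * ((if p = b then (1:ℝ) else 0) - (1/e) * (∑ q, glow p q * u q) * u b)
          = ∑ m, ∑ p,
              ((if a = m then (1:ℝ) else 0) * ka m p * (if p = b then (1:ℝ) else 0)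
               - (if a = m then (1:ℝ) else 0) * ka m p * ((1/e) * (∑ q, glow p q * u q) * u b)
               - ((1/e) * u a * (∑ q, glow m q * u q)) * ka m p * (if p = b then (1:ℝ) else 0)
               + ((1/e) * u a * (∑ q, glow m q * u q)) * ka m p
                   * ((1/e) * (∑ q, glow p q * u q) * u b)) := by
            apply scongr; intro m; apply scongr; intro p; ring
        _ = ka a b - (1/e) * u b * (∑ p, ka a p * (∑ q, glow p q * u q))
              - (1/e) * u a * (∑ m, (∑ q, glow m q * u q) * ka m b) := by
            simp only [Finset.sum_add_distrib, Finset.sum_sub_distrib]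
            rw [hS1, hS2, hS3, hS4]
            ring
    rw [hsplit] at hT2
    -- conclude
    have hrhs : ∑ m, (∑ q, glow m q * u q) * (u a * ka m b - u b * ka m a)
        = u a * (∑ m, (∑ q, glow m q * u q) * ka m b)
          + u b * (∑ m, ka a m * (∑ q, glow m q * u q)) := by
      calc ∑ m, (∑ q, glow m q * u q) * (u a * ka m b - u b * ka m a)
          = ∑ m, (u a * ((∑ q, glow m q * u q) * ka m b)
              + u b * (ka a m * (∑ q, glow m q * u q))) := by
            apply scongr; intro m; rw [hka m a]; ring
        _ = u a * (∑ m, (∑ q, glow m q * u q) * ka m b)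
              + u b * (∑ m, ka a m * (∑ q, glow m q * u q)) := by
            rw [Finset.sum_add_distrib, ← Finset.mul_sum, ← Finset.mul_sum]
    rw [hrhs]
    linarith [hT2]
  · -- reverse direction
    intro hR i j
    calc ∑ m, ∑ p, hu i m * ka m p * hu p j
        = ∑ m, ∑ p, ∑ q, (1/e) * ((hu i m * u m) * ((∑ r, glow q r * u r) * ka q p * hu p j)
            - ((∑ r, glow q r * u r) * ka q m * hu i m) * (u p * hu p j)) := by
          apply scongr; intro m; apply scongr; intro p
          rw [hR m p,
            show hu i m * ((1/e) * ∑ q, (∑ r, glow q r * u r) * (u m * ka q p - u p * ka q m)) * hu p j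
              = (∑ q, (∑ r, glow q r * u r) * (u m * ka q p - u p * ka q m))
                * ((1/e) * hu i m * hu p j) from by ring,
            Finset.sum_mul]
          exact scongr fun q => by ring
      _ = ∑ q, ∑ m, ∑ p, (1/e) * ((hu i m * u m) * ((∑ r, glow q r * u r) * ka q p * hu p j)
            - ((∑ r, glow q r * u r) * ka q m * hu i m) * (u p * hu p j)) := by
          rw [show (∑ m, ∑ p, ∑ q, (1/e) * ((hu i m * u m) * ((∑ r, glow q r * u r) * ka q p * hu p j)
            - ((∑ r, glow q r * u r) * ka q m * hu i m) * (u p * hu p j)))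
            = ∑ m, ∑ q, ∑ p, (1/e) * ((hu i m * u m) * ((∑ r, glow q r * u r) * ka q p * hu p j)
            - ((∑ r, glow q r * u r) * ka q m * hu i m) * (u p * hu p j)) from
              scongr fun m => Finset.sum_comm,
            Finset.sum_comm]
      _ = 0 := by
          apply Finset.sum_eq_zero; intro q _
          rw [split2 (fun m => hu i m * u m) (fun p => (∑ r, glow q r * u r) * ka q p * hu p j)
            (fun m => (∑ r, glow q r * u r) * ka q m * hu i m) (fun p => u p * hu p j) (1/e),
            hhuu i, hhuu2 j]
          ring
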